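/- In the commuting graph Γ(M_3(𝓑)) over the binary Boolean semiring, the distance between the matrices A = E_{1,3} + E_{3,1} + E_{3,2} and B = E_{1,1} + E_{2,3} is at least 4. -/

import Mathlib

/-- The commuting graph of the semiring of `n × n` matrices over `R`: vertices are the
noncentral matrices, and two distinct vertices are adjacent iff they commute. -/
def commGraph (R : Type*) [Semiring R] (n : ℕ) :
    SimpleGraph {X : Matrix (Fin n) (Fin n) R // ¬ ∀ Y, X * Y = Y * X} where
  Adj X Y := X ≠ Y ∧ X.1 * Y.1 = Y.1 * X.1
  symm := ⟨fun _ _ h => ⟨fun e => h.1 e.symm, h.2.symm⟩⟩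
  loopless := ⟨fun _ h => h.1 rfl⟩

section Aux

variable {R : Type*} [CommSemiring R]

/-- Characterization of the centralizer of `C = E₀₀ + E₁₂`. -/
lemma centC_aux (C X : Matrix (Fin 3) (Fin 3) R)
    (hCdef : C = Matrix.single 0 0 1 + Matrix.single 1 2 1)
    (hcomm : X * C = C * X) :
    X 0 1 = 0 ∧ X 0 2 = 0 ∧ X 1 0 = 0 ∧ X 2 0 = 0 ∧ X 2 1 = 0 ∧ X 1 1 = X 2 2 := by
  subst hCdef
  have h := fun i j => congrFun (congrFun hcomm i) j
  simp only [Matrix.mul_apply, Fin.sum_univ_three, Matrix.add_apply,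
    Matrix.single, Matrix.of_apply] at h
  have h01 := h 0 1
  have h02 := h 0 2
  have h10 := h 1 0
  have h11 := h 1 1
  have h12 := h 1 2
  have h20 := h 2 0
  simp at h01 h02 h10 h11 h12 h20
  exact ⟨h01.symm, by rw [← h02, h01], by rw [h10, h20], h20, h11.symm, h12⟩

/-- Characterization of the centralizer of `A = E₀₂ + E₂₀ + E₂₁`. -/
lemma centA_aux (A X : Matrix (Fin 3) (Fin 3) R)
    (hAdef : A = Matrix.single 0 2 1 + Matrix.single 2 0 1 +
      Matrix.single 2 1 1)
    (hcomm : X * A = A * X) :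
    X 1 0 = 0 ∧ X 1 2 = 0 ∧ X 2 0 = X 0 2 ∧ X 2 1 = X 0 2 ∧ X 2 2 = X 0 0 ∧
      X 0 0 = X 0 1 + X 1 1 := by
  subst hAdef
  have h := fun i j => congrFun (congrFun hcomm i) j
  simp only [Matrix.mul_apply, Fin.sum_univ_three, Matrix.add_apply,
    Matrix.single, Matrix.of_apply] at h
  have h00 := h 0 0
  have h01 := h 0 1
  have h02 := h 0 2
  have h10 := h 1 0
  have h12 := h 1 2
  have h21 := h 2 1
  simp at h00 h01 h02 h10 h12 h21
  exact ⟨h12, h10, h00.symm, h01.symm, h02.symm, h02.trans h21⟩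

/-- A matrix which is diagonal with constant diagonal is a scalar matrix. -/
lemma eq_scalar_aux (X : Matrix (Fin 3) (Fin 3) R) (q : R)
    (h00 : X 0 0 = q) (h11 : X 1 1 = q) (h22 : X 2 2 = q)
    (h01 : X 0 1 = 0) (h02 : X 0 2 = 0) (h10 : X 1 0 = 0)
    (h12 : X 1 2 = 0) (h20 : X 2 0 = 0) (h21 : X 2 1 = 0) :
    X = q • (1 : Matrix (Fin 3) (Fin 3) R) := by
  ext i j
  fin_cases i <;> fin_cases j <;>
    simp [Matrix.smul_apply, Matrix.one_apply, h00, h11, h22, h01, h02, h10, h12, h20, h21]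

/-- Scalar matrices commute with everything. -/
lemma scalar_comm_aux (q : R) (Y : Matrix (Fin 3) (Fin 3) R) :
    (q • (1 : Matrix (Fin 3) (Fin 3) R)) * Y = Y * (q • 1) := by
  rw [Matrix.smul_mul, Matrix.mul_smul, Matrix.one_mul, Matrix.mul_one]

end Aux

/-- In `Γ(M_3(𝓑))`, the distance between `A = E_{1,3} + E_{3,1} + E_{3,2}` and
`B = E_{1,1} + E_{2,3}` is at least 4. -/
theorem dist_ge_four_M3_bool (B : Type*) [CommSemiring B] (h01 : (0 : B) ≠ 1)
    (hmem : ∀ x : B, x = 0 ∨ x = 1) (h11 : (1 : B) + 1 = 1)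
    (A C : Matrix (Fin 3) (Fin 3) B)
    (hAdef : A = Matrix.single 0 2 1 + Matrix.single 2 0 1 +
      Matrix.single 2 1 1)
    (hCdef : C = Matrix.single 0 0 1 + Matrix.single 1 2 1)
    (hA : ¬ ∀ Y, A * Y = Y * A) (hC : ¬ ∀ Y, C * Y = Y * C) :
    4 ≤ (commGraph B 3).edist ⟨A, hA⟩ ⟨C, hC⟩ := by
  by_contra hlt
  push_neg at hlt
  have hne : (commGraph B 3).edist ⟨A, hA⟩ ⟨C, hC⟩ ≠ ⊤ := (hlt.trans_le le_top).ne
  obtain ⟨p, hp⟩ := SimpleGraph.exists_walk_of_edist_ne_top hne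
  have hlen : p.length ≤ 3 := by
    have h4 : ((p.length : ℕ∞)) < 4 := by rw [hp]; exact hlt
    exact_mod_cast Nat.lt_succ_iff.mp (by exact_mod_cast h4)
  clear hp hne hlt
  cases p with
  | nil =>
    -- A = C : impossible, entry (0,0) differs
    have hAC : (Matrix.single 0 2 1 + Matrix.single 2 0 1 +
        Matrix.single 2 1 1 : Matrix (Fin 3) (Fin 3) B) =
        Matrix.single 0 0 1 + Matrix.single 1 2 1 := by
      rw [← hAdef, ← hCdef]
    have h00 := congrFun (congrFun hAC 0) 0
    simp [Matrix.add_apply, Matrix.single] at h00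
    exact h01 h00
  | @cons _ X _ h1 p =>
    cases p with
    | nil =>
      -- A adjacent to C : but then A would be in the centralizer of C
      have hc := centC_aux C A hCdef h1.2
      rw [hAdef] at hc
      simp [Matrix.add_apply, Matrix.single] at hc
      exact h01 hc.symm
    | @cons _ Y _ h2 p =>
      cases p with
      | nil =>
        -- A ~ X ~ C : then X is scalar, contradiction
        have ha := centA_aux A X.1 hAdef h1.2.symm
        have hc := centC_aux C X.1 hCdef h2.2
        obtain ⟨a1, a2, a3, a4, a5, a6⟩ := ha
        obtain ⟨c1, c2, c3, c4, c5, c6⟩ := hc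
        apply X.2
        intro Z
        have hX : X.1 = (X.1 1 1) • 1 := by
          refine eq_scalar_aux X.1 _ ?_ rfl ?_ c1 c2 c3 a2 (by rw [a3, c2]) (by rw [a4, c2])
          · rw [a6, c1, zero_add]
          · exact c6.symm
        rw [hX]
        exact scalar_comm_aux _ _
      | @cons _ Z _ h3 p =>
        cases p with
        | nil =>
          -- A ~ X ~ Y ~ C : the heart of the matter
          have ha := centA_aux A X.1 hAdef h1.2.symm
          have hc := centC_aux C Y.1 hCdef h3.2
          obtain ⟨a1, a2, a3, a4, a5, a6⟩ := ha
          obtain ⟨c1, c2, c3, c4, c5, c6⟩ := hc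
          have h := fun i j => congrFun (congrFun h2.2 i) j
          simp only [Matrix.mul_apply, Fin.sum_univ_three] at h
          have E1 := h 0 1
          have E2 := h 0 2
          have E3 := h 1 0
          have E5 := h 2 0
          rw [c1, c5, c2] at E1
          rw [c2, c1, ← c6] at E2
          rw [a1, a2, c3, a3] at E3
          rw [c3, c4, c5, a3, a4, ← c6] at E5
          simp only [mul_zero, zero_mul, add_zero, zero_add] at E1 E2 E3 E5
          -- E1 : X01 * Y11 = Y00 * X01
          -- E2 : X01 * Y12 + X02 * Y11 = Y00 * X02
          -- E3 : 0 = Y12 * X02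
          -- E5 : X02 * Y00 = Y11 * X02
          have hYscalar : ¬ (Y.1 1 2 = 0 ∧ Y.1 1 1 = Y.1 0 0) := by
            rintro ⟨hz1, hz2⟩
            apply Y.2
            intro W
            have hY : Y.1 = (Y.1 1 1) • 1 :=
              eq_scalar_aux Y.1 _ hz2.symm rfl c6.symm c1 c2 c3 hz1 c4 c5
            rw [hY]; exact scalar_comm_aux _ _
          have hXscalar : X.1 0 1 = 0 → X.1 0 2 = 0 → False := by
            intro hp0 ht0
            apply X.2
            intro W
            have hX : X.1 = (X.1 1 1) • 1 := by
              refine eq_scalar_aux X.1 _ ?_ rfl ?_ hp0 ht0 a1 a2 (by rw [a3, ht0])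
                (by rw [a4, ht0])
              · rw [a6, hp0, zero_add]
              · rw [a5, a6, hp0, zero_add]
            rw [hX]; exact scalar_comm_aux _ _
          rcases hmem (X.1 0 2) with ht0 | ht1
          · -- t = 0
            rw [ht0] at E2
            simp only [mul_zero, zero_mul, add_zero, zero_add] at E2
            -- E2 : X01 * Y12 = 0
            rcases hmem (Y.1 1 2) with hc0 | hc1
            · rcases hmem (X.1 0 1) with hp0 | hp1
              · exact hXscalar hp0 ht0
              · rw [hp1, one_mul, mul_one] at E1
                exact hYscalar ⟨hc0, E1⟩
            · rw [hc1, mul_one] at E2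
              exact hXscalar E2 ht0
          · -- t = 1
            rw [ht1, mul_one] at E3
            rw [ht1, one_mul, mul_one] at E2
            rw [← E3, mul_zero, zero_add] at E2
            exact hYscalar ⟨E3.symm, E2⟩
        | @cons _ W _ h4 p =>
          simp only [SimpleGraph.Walk.length_cons] at hlen
          omega
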